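/- arXiv:1712.08712 — 2 statements merged into one kernel-verified Lean document; each statement's English description precedes it below -/
import Mathlib

section
/- Let G_t and G_{t+1} be finite trees with G_t a subtree of G_{t+1}, such that every vertex of G_{t+1} not in G_t is adjacent to a vertex of G_t (one growth step). If the eccentricity of the Jordan center of G_{t+1} is strictly less than the eccentricity in G_{t+1} of the Jordan center of G_t, then the Jordan center of G_{t+1} is a neighbor of the Jordan center of G_t. -/
open SimpleGraph Finset

section helpers

variable {V : Type*} {T : SimpleGraph V}

private lemma tree_path_length (hT : T.IsTree) {u v : V} (p : T.Walk u v) (hp : p.IsPath) :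
    p.length = T.dist u v := by
  classical
  obtain ⟨q, hq⟩ := hT.isConnected.exists_walk_length_eq_dist u v
  have hlen : q.bypass.length = T.dist u v :=
    le_antisymm (hq ▸ q.length_bypass_le) (SimpleGraph.dist_le _)
  have hpq : (⟨p, hp⟩ : T.Path u v) = ⟨q.bypass, q.bypass_isPath⟩ :=
    hT.IsAcyclic.path_unique _ _
  have : p = q.bypass := congrArg Subtype.val hpq
  rw [this, hlen]

private lemma exists_geodesic (hconn : T.Connected) (u v : V) :
    ∃ p : T.Walk u v, p.IsPath ∧ p.length = T.dist u v := by
  classical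
  obtain ⟨q, hq⟩ := hconn.exists_walk_length_eq_dist u v
  exact ⟨q.bypass, q.bypass_isPath,
    le_antisymm (hq ▸ q.length_bypass_le) (SimpleGraph.dist_le _)⟩

private lemma adj_dist_cases (hT : T.IsTree) {a b : V} (hab : T.Adj a b) (x : V) :
    T.dist a x = T.dist b x + 1 ∨ T.dist b x = T.dist a x + 1 := by
  classical
  obtain ⟨p, hp, hlen⟩ := exists_geodesic hT.isConnected a x
  by_cases hb : b ∈ p.support
  · left
    have h1 := tree_path_length hT _ (hp.takeUntil hb)
    have h2 := tree_path_length hT _ (hp.dropUntil hb)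
    have h3 : (p.takeUntil b hb).length + (p.dropUntil b hb).length = p.length := by
      rw [← Walk.length_append, p.take_spec hb]
    have hub : T.dist a b = 1 := dist_eq_one_iff_adj.mpr hab
    omega
  · right
    have hp' : (Walk.cons hab.symm p).IsPath := hp.cons hb
    have h := tree_path_length hT _ hp'
    rw [Walk.length_cons] at h
    omega

private lemma exists_gate (hconn : T.Connected) {x y : V} (hxy : x ≠ y) :
    ∃ g, T.Adj x g ∧ T.dist g y + 1 = T.dist x y := by
  obtain ⟨p, hlen⟩ := hconn.exists_walk_length_eq_dist x y
  cases p with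
  | nil => exact absurd rfl hxy
  | @cons _ b _ h q =>
    refine ⟨b, h, ?_⟩
    have h1 : T.dist b y ≤ q.length := SimpleGraph.dist_le q
    have h2 : T.dist x y ≤ T.dist x b + T.dist b y := hconn.dist_triangle
    have h3 : T.dist x b = 1 := dist_eq_one_iff_adj.mpr h
    rw [Walk.length_cons] at hlen
    omega

private lemma gate_unique (hT : T.IsTree) {x y g g' : V} (hg : T.Adj x g) (hg' : T.Adj x g')
    (h1 : T.dist g y + 1 = T.dist x y) (h2 : T.dist g' y + 1 = T.dist x y) : g = g' := by
  classical
  obtain ⟨p, hp, hlen⟩ := exists_geodesic hT.isConnected g y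
  obtain ⟨p', hp', hlen'⟩ := exists_geodesic hT.isConnected g' y
  have hxp : x ∉ p.support := by
    intro hx
    have hd := tree_path_length hT _ (hp.dropUntil hx)
    have hle := Walk.length_dropUntil_le p hx
    omega
  have hxp' : x ∉ p'.support := by
    intro hx
    have hd := tree_path_length hT _ (hp'.dropUntil hx)
    have hle := Walk.length_dropUntil_le p' hx
    omega
  have hq : (Walk.cons hg p).IsPath := hp.cons hxp
  have hq' : (Walk.cons hg' p').IsPath := hp'.cons hxp'
  have heq : (⟨Walk.cons hg p, hq⟩ : T.Path x y) = ⟨Walk.cons hg' p', hq'⟩ :=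
    hT.IsAcyclic.path_unique _ _
  have hw : Walk.cons hg p = Walk.cons hg' p' := congrArg Subtype.val heq
  have := congrArg (fun w : T.Walk x y => w.getVert 1) hw
  simpa [Walk.getVert_cons] using this

private lemma cut_dist (hT : T.IsTree) {a b : V} (hab : T.Adj a b) :
    ∀ n (x y : V), T.dist x b = n → T.dist a x = T.dist x b + 1 →
      T.dist b y = T.dist a y + 1 → T.dist x y = T.dist x b + 1 + T.dist a y := by
  have hcm : ∀ p q : V, T.dist p q = T.dist q p := fun p q => SimpleGraph.dist_comm
  have hconn := hT.isConnected
  intro n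
  induction n using Nat.strong_induction_on with
  | _ n ih =>
    intro x y hn hx hy
    rcases Nat.eq_zero_or_pos n with h0 | hpos
    · subst h0
      have hxb : x = b := hconn.dist_eq_zero_iff.mp hn
      subst hxb
      omega
    · have hxb : x ≠ b := by
        intro h
        have hz : T.dist x b = 0 := by rw [h]; exact SimpleGraph.dist_self
        omega
      obtain ⟨g, hxg, hgb⟩ := exists_gate hconn hxb
      have hdxg : T.dist x g = 1 := dist_eq_one_iff_adj.mpr hxg
      have hdab : T.dist a b = 1 := dist_eq_one_iff_adj.mpr hab
      have ht1 : T.dist a g ≤ T.dist a b + T.dist b g := hconn.dist_triangle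
      have ht2 : T.dist a x ≤ T.dist a g + T.dist g x := hconn.dist_triangle
      have e1 := hcm b g
      have e2 := hcm g x
      have hag : T.dist a g = T.dist g b + 1 := by omega
      have hgy := ih (T.dist g b) (by omega) g y rfl hag hy
      rcases adj_dist_cases hT hxg y with hc | hc
      · have ht3 : T.dist x y ≤ T.dist x g + T.dist g y := hconn.dist_triangle
        omega
      · exfalso
        by_cases hgb0 : g = b
        · subst hgb0
          have hxa : x = a := gate_unique hT (y := y) hxg.symm hab.symm (by omega) (by omega)
          have h0 : T.dist a a = 0 := SimpleGraph.dist_self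
          rw [hxa] at hx
          omega
        · obtain ⟨x₁, hgx₁, hx₁b⟩ := exists_gate hconn hgb0
          have hdgx₁ : T.dist g x₁ = 1 := dist_eq_one_iff_adj.mpr hgx₁
          have ht3 : T.dist a x₁ ≤ T.dist a b + T.dist b x₁ := hconn.dist_triangle
          have ht4 : T.dist a g ≤ T.dist a x₁ + T.dist x₁ g := hconn.dist_triangle
          have e3 := hcm b x₁
          have e4 := hcm x₁ g
          have hax₁ : T.dist a x₁ = T.dist x₁ b + 1 := by omega
          have hx₁y := ih (T.dist x₁ b) (by omega) x₁ y rfl hax₁ hy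
          have hxx₁ : x = x₁ := gate_unique hT (y := y) hxg.symm hgx₁ (by omega) (by omega)
          have hfin : T.dist x b = T.dist x₁ b := by rw [hxx₁]
          omega

end helpers

/-- One growth step: `T` is the finite tree `G_{t+1}`, and `S` is the vertex set of the subtree
`G_t` (nonempty, path-closed), with every vertex outside `S` adjacent to a vertex of `S`.
If `vt` is a Jordan center of `G_t` (minimizing `S.sup (T.dist ·)` over `S`), `vt1` is a Jordan
center of `G_{t+1}` (minimizing eccentricity over all vertices), and the eccentricity of `vt1`
in `G_{t+1}` is strictly smaller than that of `vt` in `G_{t+1}`, then `vt1` is a neighbor of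
`vt`. -/
theorem stmt4 {V : Type*} [Fintype V] (T : SimpleGraph V) (hT : T.IsTree)
    (S : Finset V) (hS : S.Nonempty)
    (hconv : ∀ u v w : V, u ∈ S → w ∈ S → T.dist u v + T.dist v w = T.dist u w → v ∈ S)
    (hnew : ∀ x : V, x ∉ S → ∃ y ∈ S, T.Adj x y)
    (vt vt1 : V) (hvt : vt ∈ S)
    (hvt_min : ∀ w ∈ S, S.sup (fun z => T.dist vt z) ≤ S.sup (fun z => T.dist w z))
    (hvt1_min : ∀ w : V, Finset.univ.sup (fun z => T.dist vt1 z) ≤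
      Finset.univ.sup (fun z => T.dist w z))
    (hmove : Finset.univ.sup (fun z => T.dist vt1 z) <
      Finset.univ.sup (fun z => T.dist vt z)) :
    T.Adj vt vt1 := by
  classical
  have hconn := hT.isConnected
  have hcm : ∀ p q : V, T.dist p q = T.dist q p := fun p q => SimpleGraph.dist_comm
  have hne : vt ≠ vt1 := by rintro rfl; exact absurd hmove (lt_irrefl _)
  obtain ⟨u, hvtu, hu⟩ := exists_gate hconn hne
  by_cases huv : u = vt1
  · rwa [huv] at hvtu
  exfalso
  have hdvtu : T.dist vt u = 1 := dist_eq_one_iff_adj.mpr hvtu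
  have huvt1 : 0 < T.dist u vt1 := hconn.pos_dist_of_ne huv
  have hF1 : ∀ x : V, T.dist vt1 x ≤ Finset.univ.sup (fun z => T.dist vt1 z) :=
    fun x => Finset.le_sup (Finset.mem_univ x)
  have hA : ∀ z ∈ S, T.dist vt z ≤ S.sup (fun z => T.dist vt z) :=
    fun z hz => Finset.le_sup hz
  have hF3 : Finset.univ.sup (fun z => T.dist vt z) ≤ S.sup (fun z => T.dist vt z) + 1 := by
    apply Finset.sup_le
    intro x _
    by_cases hxS : x ∈ S
    · exact le_trans (Finset.le_sup hxS) (Nat.le_succ _)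
    · obtain ⟨y, hyS, hxy⟩ := hnew x hxS
      have ht : T.dist vt x ≤ T.dist vt y + T.dist y x := hconn.dist_triangle
      have hyx : T.dist y x = 1 := dist_eq_one_iff_adj.mpr hxy.symm
      have hyA := hA y hyS
      omega
  have huS : u ∈ S := by
    by_cases hv1S : vt1 ∈ S
    · exact hconv vt u vt1 hvt hv1S (by omega)
    · obtain ⟨y, hyS, hady⟩ := hnew vt1 hv1S
      have h1y : T.dist vt1 y = 1 := dist_eq_one_iff_adj.mpr hady
      have hyd : T.dist vt vt1 = T.dist vt y + 1 := by
        rcases adj_dist_cases hT hady vt with hc | hc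
        · have e1 := hcm vt1 vt; have e2 := hcm y vt; omega
        · exact absurd (hconv vt vt1 y hvt hyS (by
            have e1 := hcm vt1 vt; have e2 := hcm y vt; omega)) hv1S
      have hyvt : vt ≠ y := by
        intro h; subst h
        have : T.dist vt vt = 0 := SimpleGraph.dist_self
        omega
      obtain ⟨g, hg, hgy⟩ := exists_gate hconn hyvt
      have hgv1 : T.dist g vt1 + 1 = T.dist vt vt1 := by
        have ht1 : T.dist g vt1 ≤ T.dist g y + T.dist y vt1 := hconn.dist_triangle
        have ht2 : T.dist vt vt1 ≤ T.dist vt g + T.dist g vt1 := hconn.dist_triangle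
        have h2 : T.dist vt g = 1 := dist_eq_one_iff_adj.mpr hg
        have e1 := hcm y vt1
        omega
      have hug : u = g := gate_unique hT hvtu hg hu hgv1
      subst hug
      exact hconv vt u y hvt hyS (by omega)
  have hkey : ∀ z ∈ S, T.dist u z + 1 ≤ S.sup (fun z => T.dist vt z) := by
    intro z hz
    have hAz := hA z hz
    rcases adj_dist_cases hT hvtu z with hc | hc
    · omega
    · have hcut := cut_dist hT hvtu.symm (T.dist z vt) z vt1 rfl
        (by have := hcm vt z; omega) (by omega)
      have h1 := hF1 z
      have e1 := hcm z vt1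
      have e2 := hcm z vt
      omega
  have hBA : S.sup (fun z => T.dist u z) + 1 ≤ S.sup (fun z => T.dist vt z) := by
    obtain ⟨z0, hz0⟩ := hS
    have h0 := hkey z0 hz0
    have hsup : S.sup (fun z => T.dist u z) ≤ S.sup (fun z => T.dist vt z) - 1 :=
      Finset.sup_le fun z hz => by have := hkey z hz; omega
    omega
  have hmin := hvt_min u huS
  omega
end

section
/- In the IC-type deterministic growth model, if the Jordan center moves from v*_t at step t to v*_{t+1} at step t+1, then the step at which v*_t first appeared in the tree strictly precedes the step at which v*_{t+1} first appeared. Consequently, a vertex that ceases to be the Jordan center can never again become the Jordan center at any later step. -/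
/-- The infection time of a vertex: the first step at which it appears in the growing tree. -/
noncomputable def infTime {V : Type*} (S : ℕ → Finset V) (v : V) : ℕ :=
  sInf {s : ℕ | v ∈ S s}

namespace Stmt10Aux

open SimpleGraph Walk

variable {V : Type*} {T : SimpleGraph V}

private lemma path_length (hT : T.IsTree) {a b : V} (p : T.Walk a b) (hp : p.IsPath) :
    p.length = T.dist a b := by
  obtain ⟨q, hq, hl⟩ := hT.isConnected.exists_path_of_dist a b
  rw [(hT.existsUnique_path a b).unique hp hq, hl]

private lemma dzero (hT : T.IsTree) {a b : V} (h : T.dist a b = 0) : a = b :=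
  (hT.isConnected.dist_eq_zero_iff).mp h

private lemma append_isPath {a m c : V} {p : T.Walk a m} {q : T.Walk m c}
    (hp : p.IsPath) (hq : q.IsPath)
    (hint : ∀ z ∈ p.support, z ∈ q.support → z = m) : (p.append q).IsPath := by
  rw [Walk.isPath_def, Walk.support_append]
  refine List.Nodup.append hp.support_nodup (hq.support_nodup.tail) ?_
  intro z hz1 hz2
  have hz2' : z ∈ q.support := by
    rw [q.support_eq_cons]; exact List.mem_cons_of_mem _ hz2
  have hzm := hint z hz1 hz2'
  subst hzm
  have hnd : q.support.Nodup := hq.support_nodup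
  rw [q.support_eq_cons] at hnd
  exact (List.nodup_cons.mp hnd).1 hz2

private lemma path_btw (hT : T.IsTree) {a b x : V} (p : T.Walk a b) (hp : p.IsPath)
    (hx : x ∈ p.support) : T.dist a x + T.dist x b = T.dist a b := by
  classical
  have h1 := path_length hT _ (hp.takeUntil hx)
  have h2 := path_length hT _ (hp.dropUntil hx)
  have h3 := path_length hT p hp
  have h4 := congrArg Walk.length (p.take_spec hx)
  rw [Walk.length_append] at h4
  omega

private lemma btw_mem (hT : T.IsTree) {a b x : V}
    (h : T.dist a x + T.dist x b = T.dist a b)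
    (p : T.Walk a b) (hp : p.IsPath) : x ∈ p.support := by
  obtain ⟨p1, hp1, _⟩ := hT.isConnected.exists_path_of_dist a x
  obtain ⟨p2, hp2, _⟩ := hT.isConnected.exists_path_of_dist x b
  have hint : ∀ z ∈ p1.support, z ∈ p2.support → z = x := by
    intro z hz1 hz2
    have e1 := path_btw hT p1 hp1 hz1
    have e2 := path_btw hT p2 hp2 hz2
    have e3 : T.dist a b ≤ T.dist a z + T.dist z b := hT.isConnected.dist_triangle
    have c1 : T.dist z x = T.dist x z := SimpleGraph.dist_comm
    have hz0 : T.dist z x = 0 := by omega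
    exact dzero hT hz0
  have happ := append_isPath hp1 hp2 hint
  have hpe := (hT.existsUnique_path a b).unique hp happ
  rw [hpe, Walk.mem_support_append_iff]
  exact Or.inl p1.end_mem_support

private lemma btw_trans (hT : T.IsTree) {a x b y : V}
    (h1 : T.dist a x + T.dist x b = T.dist a b)
    (h2 : T.dist a y + T.dist y x = T.dist a x) :
    T.dist a y + T.dist y b = T.dist a b := by
  have t1 : T.dist a b ≤ T.dist a y + T.dist y b := hT.isConnected.dist_triangle
  have t2 : T.dist y b ≤ T.dist y x + T.dist x b := hT.isConnected.dist_triangle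
  omega

private lemma btw_ord (hT : T.IsTree) {a b x y : V}
    (hx : T.dist a x + T.dist x b = T.dist a b)
    (hy : T.dist a y + T.dist y b = T.dist a b)
    (hle : T.dist a x ≤ T.dist a y) : T.dist a x + T.dist x y = T.dist a y := by
  classical
  obtain ⟨p, hp, _⟩ := hT.isConnected.exists_path_of_dist a b
  have hyp : y ∈ p.support := btw_mem hT hy p hp
  have hxp : x ∈ p.support := btw_mem hT hx p hp
  rw [← p.take_spec hyp, Walk.mem_support_append_iff] at hxp
  rcases hxp with h | h
  · exact path_btw hT _ (hp.takeUntil hyp) h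
  · have h2 := path_btw hT _ (hp.dropUntil hyp) h
    have c1 : T.dist y x = T.dist x y := SimpleGraph.dist_comm
    have h0 : T.dist x y = 0 := by omega
    have hxy : x = y := dzero hT h0
    subst hxy
    have hs : T.dist x x = 0 := by rw [SimpleGraph.dist_self]
    omega

private lemma exists_first_hit {L : List V} {a b : V} (Q : T.Walk a b) : b ∈ L →
    ∃ m, m ∈ L ∧ ∃ Q1 : T.Walk a m, ∀ x ∈ Q1.support, x ∈ L → x = m := by
  induction Q with
  | nil => exact fun hb => ⟨_, hb, Walk.nil, fun x hx _ => by simpa using hx⟩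
  | @cons c d e h q ih =>
    intro hb
    by_cases hc : c ∈ L
    · exact ⟨c, hc, Walk.nil, fun x hx _ => by simpa using hx⟩
    · obtain ⟨m, hm, Q1, hQ1⟩ := ih hb
      refine ⟨m, hm, Walk.cons h Q1, ?_⟩
      intro x hx hxL
      rw [Walk.support_cons] at hx
      rcases List.mem_cons.mp hx with rfl | hx'
      · exact absurd hxL hc
      · exact hQ1 x hx' hxL

private lemma exists_median (hT : T.IsTree) (a b c : V) :
    ∃ g : V, T.dist a g + T.dist g b = T.dist a b ∧ T.dist a g + T.dist g c = T.dist a c ∧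
      T.dist b g + T.dist g c = T.dist b c := by
  classical
  obtain ⟨P, hP, _⟩ := hT.isConnected.exists_path_of_dist b c
  obtain ⟨Q, hQ, _⟩ := hT.isConnected.exists_path_of_dist a b
  obtain ⟨m, hmP, Q1, hQ1⟩ := exists_first_hit Q P.start_mem_support
  have hQ1b := Q1.bypass_isPath
  have key : ∀ {e : V} (r : T.Walk m e), r.IsPath → (∀ z ∈ r.support, z ∈ P.support) →
      T.dist a m + T.dist m e = T.dist a e := by
    intro e r hr hrsub
    have hA : (Q1.bypass.append r).IsPath :=
      append_isPath hQ1b hr fun z hz1 hz2 => hQ1 z (Q1.support_bypass_subset hz1) (hrsub z hz2)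
    have h1 := path_length hT _ hA
    rw [Walk.length_append] at h1
    have h2 := path_length hT _ hQ1b
    have h3 := path_length hT _ hr
    omega
  refine ⟨m, ?_, ?_, path_btw hT P hP hmP⟩
  · exact key (P.takeUntil m hmP).reverse ((hP.takeUntil hmP).reverse)
      (fun z hz => P.support_takeUntil_subset hmP
        (by rwa [Walk.support_reverse, List.mem_reverse] at hz))
  · exact key (P.dropUntil m hmP) (hP.dropUntil hmP)
      (fun z hz => P.support_dropUntil_subset hmP hz)

private lemma adj_dist (hT : T.IsTree) {x y : V} (hxy : T.Adj x y) (c : V) :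
    T.dist c y = T.dist c x + 1 ∨ T.dist c x = T.dist c y + 1 := by
  classical
  obtain ⟨p, hp, _⟩ := hT.isConnected.exists_path_of_dist c x
  by_cases hy : y ∈ p.support
  · right
    have h1 := path_btw hT p hp hy
    have h2 : T.dist y x = 1 := SimpleGraph.dist_eq_one_iff_adj.mpr hxy.symm
    omega
  · left
    have hq : (Walk.cons hxy Walk.nil).IsPath := by
      rw [Walk.isPath_def]
      simp [hxy.ne]
    have hA : (p.append (Walk.cons hxy Walk.nil)).IsPath := by
      refine append_isPath hp hq ?_
      intro z hz1 hz2
      simp only [Walk.support_cons, Walk.support_nil, List.mem_cons,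
        List.mem_singleton, List.not_mem_nil, or_false] at hz2
      rcases hz2 with rfl | rfl
      · rfl
      · exact absurd hz1 hy
    have h1 := path_length hT _ hA
    rw [Walk.length_append] at h1
    have h2 := path_length hT p hp
    simp only [Walk.length_cons, Walk.length_nil] at h1
    omega

private lemma exists_first_step (hT : T.IsTree) {a b : V} (h : 1 ≤ T.dist a b) :
    ∃ w, T.dist a w = 1 ∧ T.dist a w + T.dist w b = T.dist a b := by
  obtain ⟨p, hp, hl⟩ := hT.isConnected.exists_path_of_dist a b
  cases p with
  | nil => simp at hl; rw [SimpleGraph.dist_self] at h; omega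
  | @cons _ w _ hadj q =>
    have hq : q.IsPath := ((Walk.cons_isPath_iff hadj q).mp hp).1
    have h1 : T.dist a w = 1 := SimpleGraph.dist_eq_one_iff_adj.mpr hadj
    have h2 := path_length hT q hq
    rw [Walk.length_cons] at hl
    exact ⟨w, h1, by omega⟩

section Growth

variable {u : V} {S : ℕ → Finset V}

private lemma Smono (hmono : ∀ s, S s ⊆ S (s + 1)) :
    ∀ {s s' : ℕ}, s ≤ s' → S s ⊆ S s' := by
  intro s s' h
  induction h with
  | refl => exact Finset.Subset.refl _
  | step _ ih => exact ih.trans (hmono _)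

private lemma memu (h0 : S 0 = {u}) (hmono : ∀ s, S s ⊆ S (s + 1)) (s : ℕ) : u ∈ S s :=
  Smono hmono (Nat.zero_le s) (by rw [h0]; exact Finset.mem_singleton_self u)

private lemma depth_le (hT : T.IsTree) (h0 : S 0 = {u})
    (h1 : ∀ x : V, x ∈ S 1 → x ∉ S 0 → T.Adj u x)
    (hstep : ∀ s, ∀ x : V, x ∈ S (s + 2) → x ∉ S (s + 1) →
      ∃ y : V, y ∈ S (s + 1) ∧ y ∉ S s ∧ T.Adj x y) :
    ∀ s, ∀ x ∈ S s, T.dist u x ≤ s := by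
  intro s
  induction s with
  | zero =>
    intro x hx
    rw [h0, Finset.mem_singleton] at hx
    subst hx
    rw [SimpleGraph.dist_self]
  | succ s ih =>
    intro x hx
    by_cases hxs : x ∈ S s
    · exact (ih x hxs).trans (Nat.le_succ s)
    · cases s with
      | zero =>
        have := SimpleGraph.dist_eq_one_iff_adj.mpr (h1 x hx hxs)
        omega
      | succ s' =>
        obtain ⟨y, hyS, _, hadj⟩ := hstep s' x hx hxs
        have hy := ih y hyS
        have htri : T.dist u x ≤ T.dist u y + T.dist y x := hT.isConnected.dist_triangle
        have h2 : T.dist y x = 1 := SimpleGraph.dist_eq_one_iff_adj.mpr hadj.symm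
        omega

private lemma new_depth (hT : T.IsTree) (h0 : S 0 = {u})
    (hmono : ∀ s, S s ⊆ S (s + 1))
    (hconv : ∀ s, ∀ a b c : V, a ∈ S s → c ∈ S s →
      T.dist a b + T.dist b c = T.dist a c → b ∈ S s)
    (h1 : ∀ x : V, x ∈ S 1 → x ∉ S 0 → T.Adj u x)
    (hstep : ∀ s, ∀ x : V, x ∈ S (s + 2) → x ∉ S (s + 1) →
      ∃ y : V, y ∈ S (s + 1) ∧ y ∉ S s ∧ T.Adj x y) :
    ∀ s, ∀ x ∈ S (s + 1), x ∉ S s → T.dist u x = s + 1 := by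
  intro s
  induction s with
  | zero => exact fun x hx hnx => SimpleGraph.dist_eq_one_iff_adj.mpr (h1 x hx hnx)
  | succ s ih =>
    intro x hx hnx
    obtain ⟨y, hyS, hyn, hadj⟩ := hstep s x hx hnx
    have hy : T.dist u y = s + 1 := ih y hyS hyn
    have hxy : T.dist x y = 1 := SimpleGraph.dist_eq_one_iff_adj.mpr hadj
    rcases adj_dist hT hadj u with h | h
    · exfalso
      exact hnx (hconv (s + 1) u x y (memu h0 hmono (s + 1)) hyS (by omega))
    · omega

private lemma infTime_eq (hT : T.IsTree) (h0 : S 0 = {u})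
    (hmono : ∀ s, S s ⊆ S (s + 1))
    (hconv : ∀ s, ∀ a b c : V, a ∈ S s → c ∈ S s →
      T.dist a b + T.dist b c = T.dist a c → b ∈ S s)
    (h1 : ∀ x : V, x ∈ S 1 → x ∉ S 0 → T.Adj u x)
    (hstep : ∀ s, ∀ x : V, x ∈ S (s + 2) → x ∉ S (s + 1) →
      ∃ y : V, y ∈ S (s + 1) ∧ y ∉ S s ∧ T.Adj x y)
    {t : ℕ} {v : V} (hv : v ∈ S t) : sInf {s : ℕ | v ∈ S s} = T.dist u v := by
  have hne : {s : ℕ | v ∈ S s}.Nonempty := ⟨t, hv⟩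
  have hmem : v ∈ S (sInf {s : ℕ | v ∈ S s}) := Nat.sInf_mem hne
  cases hc : sInf {s : ℕ | v ∈ S s} with
  | zero =>
    rw [hc] at hmem
    rw [h0, Finset.mem_singleton] at hmem
    subst hmem
    rw [SimpleGraph.dist_self]
  | succ s =>
    have hnot : v ∉ S s := by
      intro hcon
      have hle := Nat.sInf_le (show s ∈ {s : ℕ | v ∈ S s} from hcon)
      omega
    rw [hc] at hmem
    exact (new_depth hT h0 hmono hconv h1 hstep s v hmem hnot).symm

private lemma e_succ_le (hT : T.IsTree) (h0 : S 0 = {u})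
    (h1 : ∀ x : V, x ∈ S 1 → x ∉ S 0 → T.Adj u x)
    (hstep : ∀ s, ∀ x : V, x ∈ S (s + 2) → x ∉ S (s + 1) →
      ∃ y : V, y ∈ S (s + 1) ∧ y ∉ S s ∧ T.Adj x y)
    (t : ℕ) (w : V) :
    (S (t + 1)).sup (fun z => T.dist w z) ≤ (S t).sup (fun z => T.dist w z) + 1 := by
  refine Finset.sup_le fun z hz => ?_
  show T.dist w z ≤ _
  by_cases hzs : z ∈ S t
  · have hh : T.dist w z ≤ (S t).sup (fun z => T.dist w z) := Finset.le_sup hzs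
    omega
  · obtain ⟨y, hyS, hadj⟩ : ∃ y, y ∈ S t ∧ T.Adj z y := by
      cases t with
      | zero => exact ⟨u, by rw [h0]; exact Finset.mem_singleton_self u, (h1 z hz hzs).symm⟩
      | succ s =>
        obtain ⟨y, hy1, _, hadj⟩ := hstep s z hz hzs
        exact ⟨y, hy1, hadj⟩
    have htri : T.dist w z ≤ T.dist w y + T.dist y z := hT.isConnected.dist_triangle
    have hh1 : T.dist y z = 1 := SimpleGraph.dist_eq_one_iff_adj.mpr hadj.symm
    have hle : T.dist w y ≤ (S t).sup (fun z => T.dist w z) := Finset.le_sup hyS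
    omega

private lemma claimC (hT : T.IsTree)
    (hconv : ∀ s, ∀ a b c : V, a ∈ S s → c ∈ S s →
      T.dist a b + T.dist b c = T.dist a c → b ∈ S s)
    {s : ℕ} {m m' : V} (hm : m ∈ S s) (hm' : m' ∈ S s)
    (hmin : ∀ w ∈ S s, (S s).sup (fun z => T.dist m z) ≤ (S s).sup (fun z => T.dist w z))
    (hmin' : ∀ w ∈ S s, (S s).sup (fun z => T.dist m' z) ≤ (S s).sup (fun z => T.dist w z))
    (hne : m ≠ m') : T.dist m m' = 1 := by
  have hD : 1 ≤ T.dist m m' := hT.isConnected.pos_dist_of_ne hne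
  by_contra hD1
  have hD2 : 2 ≤ T.dist m m' := by omega
  obtain ⟨w, hw1, hwb⟩ := exists_first_step hT hD
  have hwS : w ∈ S s := hconv s m w m' hm hm' hwb
  have heq : (S s).sup (fun z => T.dist m z) = (S s).sup (fun z => T.dist m' z) :=
    le_antisymm (hmin m' hm') (hmin' m hm)
  have hbound : ∀ z ∈ S s, T.dist w z + 1 ≤ (S s).sup (fun z => T.dist m z) := by
    intro z hz
    obtain ⟨g, hg1, hg2, hg3⟩ := exists_median hT m m' z
    by_cases hg0 : T.dist m g = 0
    · have hgm : m = g := dzero hT hg0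
      subst hgm
      have hz' : T.dist m' z ≤ (S s).sup (fun z => T.dist m' z) := Finset.le_sup hz
      have ht1 : T.dist w z ≤ T.dist w m + T.dist m z := hT.isConnected.dist_triangle
      have c1 : T.dist m w = T.dist w m := SimpleGraph.dist_comm
      have c2 : T.dist m' m = T.dist m m' := SimpleGraph.dist_comm
      omega
    · have hg0' : 1 ≤ T.dist m g := Nat.pos_of_ne_zero hg0
      have hbwg : T.dist m w + T.dist w g = T.dist m g := btw_ord hT hwb hg1 (by omega)
      have hbwz : T.dist m w + T.dist w z = T.dist m z := btw_trans hT hg2 hbwg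
      have hz' : T.dist m z ≤ (S s).sup (fun z => T.dist m z) := Finset.le_sup hz
      omega
  obtain ⟨z0, hz0, hz0e'⟩ := Finset.exists_mem_eq_sup (S s) ⟨m, hm⟩ (fun z => T.dist w z)
  have hz0e : (S s).sup (fun z => T.dist w z) = T.dist w z0 := hz0e'
  have hb1 := hbound z0 hz0
  have hb2 := hmin w hwS
  omega

private lemma claimM (hT : T.IsTree) (h0 : S 0 = {u})
    (hmono : ∀ s, S s ⊆ S (s + 1))
    (hconv : ∀ s, ∀ a b c : V, a ∈ S s → c ∈ S s →
      T.dist a b + T.dist b c = T.dist a c → b ∈ S s)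
    (h1 : ∀ x : V, x ∈ S 1 → x ∉ S 0 → T.Adj u x)
    (hstep : ∀ s, ∀ x : V, x ∈ S (s + 2) → x ∉ S (s + 1) →
      ∃ y : V, y ∈ S (s + 1) ∧ y ∉ S s ∧ T.Adj x y)
    {t : ℕ} {m m' : V} (hmS : m ∈ S t)
    (hmin : ∀ w ∈ S t, (S t).sup (fun z => T.dist m z) ≤ (S t).sup (fun z => T.dist w z))
    (hm'S : m' ∈ S (t + 1))
    (hmin' : ∀ w ∈ S (t + 1),
      (S (t + 1)).sup (fun z => T.dist m' z) ≤ (S (t + 1)).sup (fun z => T.dist w z))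
    (hlt : (S (t + 1)).sup (fun z => T.dist m' z) < (S (t + 1)).sup (fun z => T.dist m z)) :
    T.dist u m + T.dist m m' = T.dist u m' ∧ m ≠ m' := by
  have hne : m ≠ m' := by rintro rfl; exact absurd hlt (lt_irrefl _)
  -- Step 1 : ecc_t m < ecc_{t+1} m
  have hstep1 : (S t).sup (fun z => T.dist m z) < (S (t + 1)).sup (fun z => T.dist m z) := by
    by_cases hc : m' ∈ S t
    · have ha := hmin m' hc
      have hb : (S t).sup (fun z => T.dist m' z) ≤ (S (t + 1)).sup (fun z => T.dist m' z) :=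
        Finset.sup_mono (hmono t)
      omega
    · have hd : T.dist u m' = t + 1 := new_depth hT h0 hmono hconv h1 hstep t m' hm'S hc
      have h3' : T.dist m' u ≤ (S (t + 1)).sup (fun z => T.dist m' z) :=
        Finset.le_sup (memu h0 hmono (t + 1))
      have h4' := hmin u (memu h0 hmono t)
      have h5' : (S t).sup (fun z => T.dist u z) ≤ t :=
        Finset.sup_le fun z hz => depth_le hT h0 h1 hstep t z hz
      have c : T.dist m' u = T.dist u m' := SimpleGraph.dist_comm
      omega
  obtain ⟨z0, hz0S, hz0e'⟩ :=
    Finset.exists_mem_eq_sup (S (t + 1)) ⟨u, memu h0 hmono (t + 1)⟩ (fun z => T.dist m z)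
  have hz0e : (S (t + 1)).sup (fun z => T.dist m z) = T.dist m z0 := hz0e'
  have hz0new : z0 ∉ S t := by
    intro hc
    have hh : T.dist m z0 ≤ (S t).sup (fun z => T.dist m z) := Finset.le_sup hc
    omega
  have hz0d : T.dist u z0 = t + 1 := new_depth hT h0 hmono hconv h1 hstep t z0 hz0S hz0new
  obtain ⟨p, hp1, hp2, hp3⟩ := exists_median hT u m m'
  by_cases hdel : T.dist m p = 0
  · have hmp : m = p := dzero hT hdel
    subst hmp
    exact ⟨by omega, hne⟩
  exfalso
  have hdel1 : 1 ≤ T.dist m p := Nat.pos_of_ne_zero hdel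
  have hL1 : 1 ≤ T.dist m m' := hT.isConnected.pos_dist_of_ne hne
  obtain ⟨w, hw1, hwb⟩ := exists_first_step hT hL1
  have hbwp : T.dist m w + T.dist w p = T.dist m p := btw_ord hT hwb hp3 (by omega)
  have hbpu : T.dist m p + T.dist p u = T.dist m u := by
    have c1 : T.dist u p = T.dist p u := SimpleGraph.dist_comm
    have c2 : T.dist p m = T.dist m p := SimpleGraph.dist_comm
    have c3 : T.dist u m = T.dist m u := SimpleGraph.dist_comm
    omega
  have hbwu : T.dist m w + T.dist w u = T.dist m u := btw_trans hT hbpu hbwp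
  have hwS : w ∈ S t := by
    refine hconv t u w m (memu h0 hmono t) hmS ?_
    have c1 : T.dist m w = T.dist w m := SimpleGraph.dist_comm
    have c2 : T.dist w u = T.dist u w := SimpleGraph.dist_comm
    have c3 : T.dist m u = T.dist u m := SimpleGraph.dist_comm
    omega
  obtain ⟨z1, hz1S, hz1e'⟩ :=
    Finset.exists_mem_eq_sup (S t) ⟨u, memu h0 hmono t⟩ (fun z => T.dist w z)
  have hz1e : (S t).sup (fun z => T.dist w z) = T.dist w z1 := hz1e'
  have hz1min := hmin w hwS
  have hz1m : T.dist m z1 ≤ (S t).sup (fun z => T.dist m z) := Finset.le_sup hz1S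
  have hadjmw : T.Adj m w := SimpleGraph.dist_eq_one_iff_adj.mp hw1
  have cw : T.dist z1 w = T.dist w z1 := SimpleGraph.dist_comm
  have cm : T.dist z1 m = T.dist m z1 := SimpleGraph.dist_comm
  have cwm : T.dist w m = T.dist m w := SimpleGraph.dist_comm
  have hbwmz1 : T.dist w m + T.dist m z1 = T.dist w z1 := by
    rcases adj_dist hT hadjmw z1 with h | h
    · omega
    · omega
  have hbm'mz1 : T.dist m' m + T.dist m z1 = T.dist m' z1 := by
    obtain ⟨g2, hg21, hg22, hg23⟩ := exists_median hT m m' z1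
    by_cases hg20 : T.dist m g2 = 0
    · have hh : m = g2 := dzero hT hg20
      subst hh
      exact hg23
    · exfalso
      have hg2p : 1 ≤ T.dist m g2 := Nat.pos_of_ne_zero hg20
      have hbwg2 : T.dist m w + T.dist w g2 = T.dist m g2 := btw_ord hT hwb hg21 (by omega)
      have hbwz1 : T.dist m w + T.dist w z1 = T.dist m z1 := btw_trans hT hg22 hbwg2
      omega
  have hz1m' : T.dist m' z1 ≤ (S (t + 1)).sup (fun z => T.dist m' z) :=
    Finset.le_sup (hmono t hz1S)
  have hEsucc := e_succ_le hT h0 h1 hstep t m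
  have cm'm : T.dist m' m = T.dist m m' := SimpleGraph.dist_comm
  have hL : T.dist m m' = 1 := by omega
  have hpm' : T.dist p m' = 0 := by omega
  have hp_eq : p = m' := dzero hT hpm'
  rw [hp_eq] at hp1
  -- now hp1 : d u m' + d m' m = d u m
  have hbumz1 : T.dist u m + T.dist m z1 = T.dist u z1 := by
    obtain ⟨q1, hq11, hq12, hq13⟩ := exists_median hT u m z1
    by_cases hq0 : T.dist m q1 = 0
    · have hh : m = q1 := dzero hT hq0
      subst hh
      exact hq12
    · exfalso
      have hq0' : 1 ≤ T.dist m q1 := Nat.pos_of_ne_zero hq0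
      have hbmm'u : T.dist m m' + T.dist m' u = T.dist m u := by
        have d1 : T.dist u m' = T.dist m' u := SimpleGraph.dist_comm
        have d3 : T.dist u m = T.dist m u := SimpleGraph.dist_comm
        omega
      have hbmq1u : T.dist m q1 + T.dist q1 u = T.dist m u := by
        have d1 : T.dist u q1 = T.dist q1 u := SimpleGraph.dist_comm
        have d2 : T.dist q1 m = T.dist m q1 := SimpleGraph.dist_comm
        have d3 : T.dist u m = T.dist m u := SimpleGraph.dist_comm
        omega
      have hbmm'q1 : T.dist m m' + T.dist m' q1 = T.dist m q1 :=
        btw_ord hT hbmm'u hbmq1u (by omega)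
      have hbmm'z1 : T.dist m m' + T.dist m' z1 = T.dist m z1 := btw_trans hT hq13 hbmm'q1
      omega
  have hz1t : T.dist u z1 ≤ t := depth_le hT h0 h1 hstep t z1 hz1S
  have hz0m' : T.dist m' z0 ≤ (S (t + 1)).sup (fun z => T.dist m' z) := Finset.le_sup hz0S
  obtain ⟨q, hqa, hqb, hqc⟩ := exists_median hT u m z0
  have cqm : T.dist q m = T.dist m q := SimpleGraph.dist_comm
  have hq0 : T.dist m q = 0 := by omega
  have hq_eq : m = q := dzero hT hq0
  rw [← hq_eq] at hqb
  -- hqb : d u m + d m z0 = d u z0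
  have htri1 : T.dist u z0 ≤ T.dist u m' + T.dist m' z0 := hT.isConnected.dist_triangle
  omega

private lemma claimP (hT : T.IsTree) (h0 : S 0 = {u})
    (hmono : ∀ s, S s ⊆ S (s + 1))
    (hconv : ∀ s, ∀ a b c : V, a ∈ S s → c ∈ S s →
      T.dist a b + T.dist b c = T.dist a c → b ∈ S s)
    (h1 : ∀ x : V, x ∈ S 1 → x ∉ S 0 → T.Adj u x)
    (hstep : ∀ s, ∀ x : V, x ∈ S (s + 2) → x ∉ S (s + 1) →
      ∃ y : V, y ∈ S (s + 1) ∧ y ∉ S s ∧ T.Adj x y)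
    {t : ℕ} {v m : V} (hvm : T.dist v m = 1)
    (hbuvm : T.dist u v + T.dist v m = T.dist u m)
    (hvS : v ∈ S t) (hmS : m ∈ S t)
    (hmlt : (S t).sup (fun z => T.dist m z) < (S t).sup (fun z => T.dist v z))
    (heq1 : (S (t + 1)).sup (fun z => T.dist v z) = (S (t + 1)).sup (fun z => T.dist m z)) :
    False := by
  have hadj : T.Adj v m := SimpleGraph.dist_eq_one_iff_adj.mp hvm
  have hmono1 : (S t).sup (fun z => T.dist v z) ≤ (S (t + 1)).sup (fun z => T.dist v z) :=
    Finset.sup_mono (hmono t)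
  obtain ⟨z0, hz0S, hz0e'⟩ :=
    Finset.exists_mem_eq_sup (S (t + 1)) ⟨m, hmono t hmS⟩ (fun z => T.dist m z)
  have hz0e : (S (t + 1)).sup (fun z => T.dist m z) = T.dist m z0 := hz0e'
  have hz0new : z0 ∉ S t := by
    intro hc
    have hh : T.dist m z0 ≤ (S t).sup (fun z => T.dist m z) := Finset.le_sup hc
    omega
  have hz0d : T.dist u z0 = t + 1 := new_depth hT h0 hmono hconv h1 hstep t z0 hz0S hz0new
  have hvz0 : T.dist v z0 ≤ (S (t + 1)).sup (fun z => T.dist v z) := Finset.le_sup hz0S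
  have c1 : T.dist z0 m = T.dist m z0 := SimpleGraph.dist_comm
  have c2 : T.dist z0 v = T.dist v z0 := SimpleGraph.dist_comm
  have hmv : T.dist m v = T.dist v m := SimpleGraph.dist_comm
  have hvz0' : T.dist v z0 + 1 = T.dist m z0 := by
    rcases adj_dist hT hadj z0 with h | h
    · omega
    · omega
  obtain ⟨z1, hz1S, hz1e'⟩ := Finset.exists_mem_eq_sup (S t) ⟨v, hvS⟩ (fun z => T.dist v z)
  have hz1e : (S t).sup (fun z => T.dist v z) = T.dist v z1 := hz1e'
  have hz1m : T.dist m z1 ≤ (S t).sup (fun z => T.dist m z) := Finset.le_sup hz1S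
  have c3 : T.dist z1 m = T.dist m z1 := SimpleGraph.dist_comm
  have c4 : T.dist z1 v = T.dist v z1 := SimpleGraph.dist_comm
  have hbvmz1 : T.dist v m + T.dist m z1 = T.dist v z1 := by
    rcases adj_dist hT hadj z1 with h | h
    · omega
    · omega
  have hbumz1 : T.dist u m + T.dist m z1 = T.dist u z1 := by
    obtain ⟨q1, hq11, hq12, hq13⟩ := exists_median hT u m z1
    by_cases hq0 : T.dist m q1 = 0
    · have hh : m = q1 := dzero hT hq0
      subst hh
      exact hq12
    · exfalso
      have hq0' : 1 ≤ T.dist m q1 := Nat.pos_of_ne_zero hq0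
      have hbmvu : T.dist m v + T.dist v u = T.dist m u := by
        have d1 : T.dist u v = T.dist v u := SimpleGraph.dist_comm
        have d3 : T.dist u m = T.dist m u := SimpleGraph.dist_comm
        omega
      have hbmq1u : T.dist m q1 + T.dist q1 u = T.dist m u := by
        have d1 : T.dist u q1 = T.dist q1 u := SimpleGraph.dist_comm
        have d2 : T.dist q1 m = T.dist m q1 := SimpleGraph.dist_comm
        have d3 : T.dist u m = T.dist m u := SimpleGraph.dist_comm
        omega
      have hbmvq1 : T.dist m v + T.dist v q1 = T.dist m q1 :=
        btw_ord hT hbmvu hbmq1u (by omega)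
      have hbmvz1 : T.dist m v + T.dist v z1 = T.dist m z1 := btw_trans hT hq13 hbmvq1
      omega
  have hz1t : T.dist u z1 ≤ t := depth_le hT h0 h1 hstep t z1 hz1S
  have hsucc := e_succ_le hT h0 h1 hstep t m
  have htri : T.dist u z0 ≤ T.dist u v + T.dist v z0 := hT.isConnected.dist_triangle
  omega

end Growth

end Stmt10Aux

open Stmt10Aux in
/-- IC-type deterministic growth (vertex sets `S t` of subtrees of an ambient tree `T`,
starting from `{u}`, new vertices attaching only to vertices added at the previous step).
(1) If the Jordan center moves from `vt` at step `t` to `vt1` at step `t+1`, then the step at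
which `vt` first appeared strictly precedes that of `vt1`.
(2) Consequently, a vertex `v` that was the Jordan center at step `t0` but ceased to be at step
`t0+1` is never again a Jordan center at any later step. -/
theorem stmt10 {V : Type*} (T : SimpleGraph V) (hT : T.IsTree)
    (u : V) (S : ℕ → Finset V)
    (h0 : S 0 = {u})
    (hmono : ∀ s, S s ⊆ S (s + 1))
    (hconv : ∀ s, ∀ a b c : V, a ∈ S s → c ∈ S s →
      T.dist a b + T.dist b c = T.dist a c → b ∈ S s)
    (h1 : ∀ x : V, x ∈ S 1 → x ∉ S 0 → T.Adj u x)
    (hstep : ∀ s, ∀ x : V, x ∈ S (s + 2) → x ∉ S (s + 1) →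
      ∃ y : V, y ∈ S (s + 1) ∧ y ∉ S s ∧ T.Adj x y) :
    (∀ t (vt vt1 : V), vt ∈ S t →
      (∀ w ∈ S t, (S t).sup (fun z => T.dist vt z) ≤ (S t).sup (fun z => T.dist w z)) →
      vt1 ∈ S (t + 1) →
      (∀ w ∈ S (t + 1),
        (S (t + 1)).sup (fun z => T.dist vt1 z) ≤ (S (t + 1)).sup (fun z => T.dist w z)) →
      (S (t + 1)).sup (fun z => T.dist vt1 z) < (S (t + 1)).sup (fun z => T.dist vt z) →
      infTime S vt < infTime S vt1) ∧
    (∀ t0 (v : V), v ∈ S t0 →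
      (∀ w ∈ S t0, (S t0).sup (fun z => T.dist v z) ≤ (S t0).sup (fun z => T.dist w z)) →
      (∃ c ∈ S (t0 + 1), (S (t0 + 1)).sup (fun z => T.dist c z) <
        (S (t0 + 1)).sup (fun z => T.dist v z)) →
      ∀ t, t0 + 1 ≤ t →
        ¬ (∀ w ∈ S t, (S t).sup (fun z => T.dist v z) ≤ (S t).sup (fun z => T.dist w z))) := by
  constructor
  · intro t vt vt1 htS hmin ht1S hmin1 hlt
    obtain ⟨hb, hne⟩ := claimM hT h0 hmono hconv h1 hstep htS hmin ht1S hmin1 hlt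
    have e1 : infTime S vt = T.dist u vt := infTime_eq hT h0 hmono hconv h1 hstep htS
    have e2 : infTime S vt1 = T.dist u vt1 := infTime_eq hT h0 hmono hconv h1 hstep ht1S
    have hpos : 1 ≤ T.dist vt vt1 := hT.isConnected.pos_dist_of_ne hne
    omega
  · intro t0 v hv hvmin hex t ht hcontra
    obtain ⟨c, hcS, hclt⟩ := hex
    have inv : ∀ t', t0 + 1 ≤ t' → ∀ m' ∈ S t',
        (∀ w ∈ S t', (S t').sup (fun z => T.dist m' z) ≤ (S t').sup (fun z => T.dist w z)) →
        T.dist u v + T.dist v m' = T.dist u m' ∧ v ≠ m' := by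
      intro t' ht'
      induction t', ht' using Nat.le_induction with
      | base =>
        intro m' hm'S hm'min
        have hlt' : (S (t0 + 1)).sup (fun z => T.dist m' z) <
            (S (t0 + 1)).sup (fun z => T.dist v z) := lt_of_le_of_lt (hm'min c hcS) hclt
        exact claimM hT h0 hmono hconv h1 hstep hv hvmin hm'S hm'min hlt'
      | succ n hn ih =>
        intro m' hm'S hm'min
        obtain ⟨m, hmS, hmmin'⟩ := Finset.exists_min_image (S n)
          (fun w => (S n).sup (fun z => T.dist w z)) ⟨u, memu h0 hmono n⟩
        have hmmin : ∀ w ∈ S n,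
            (S n).sup (fun z => T.dist m z) ≤ (S n).sup (fun z => T.dist w z) := hmmin'
        obtain ⟨hbvm, hnevm⟩ := ih m hmS hmmin
        have hvm1 : 1 ≤ T.dist v m := hT.isConnected.pos_dist_of_ne hnevm
        by_cases hcase : (S (n + 1)).sup (fun z => T.dist m' z) <
            (S (n + 1)).sup (fun z => T.dist m z)
        · obtain ⟨hbmm', hnemm'⟩ := claimM hT h0 hmono hconv h1 hstep hmS hmmin hm'S hm'min hcase
          have hmm'1 : 1 ≤ T.dist m m' := hT.isConnected.pos_dist_of_ne hnemm'
          have ht1 : T.dist u m' ≤ T.dist u v + T.dist v m' := hT.isConnected.dist_triangle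
          have ht2 : T.dist v m' ≤ T.dist v m + T.dist m m' := hT.isConnected.dist_triangle
          constructor
          · omega
          · intro hveq
            have hz : T.dist v m' = 0 := by rw [hveq, SimpleGraph.dist_self]
            omega
        · have hle2 : (S (n + 1)).sup (fun z => T.dist m' z) ≤
              (S (n + 1)).sup (fun z => T.dist m z) := hm'min m (hmono n hmS)
          have heqs : (S (n + 1)).sup (fun z => T.dist m z) =
              (S (n + 1)).sup (fun z => T.dist m' z) := le_antisymm (by omega) hle2
          have hmmin1 : ∀ w ∈ S (n + 1),
              (S (n + 1)).sup (fun z => T.dist m z) ≤ (S (n + 1)).sup (fun z => T.dist w z) := by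
            intro w hw
            rw [heqs]
            exact hm'min w hw
          by_cases hmm' : m = m'
          · subst hmm'
            exact ⟨hbvm, hnevm⟩
          · have hdm : T.dist m m' = 1 :=
              claimC hT hconv (hmono n hmS) hm'S hmmin1 hm'min hmm'
            have hadj : T.Adj m m' := SimpleGraph.dist_eq_one_iff_adj.mp hdm
            rcases adj_dist hT hadj u with hup | hdown
            · have ht1 : T.dist u m' ≤ T.dist u v + T.dist v m' := hT.isConnected.dist_triangle
              have ht2 : T.dist v m' ≤ T.dist v m + T.dist m m' := hT.isConnected.dist_triangle
              constructor
              · omega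
              · intro hveq
                have hz : T.dist v m' = 0 := by rw [hveq, SimpleGraph.dist_self]
                omega
            · have hbum'm : T.dist u m' + T.dist m' m = T.dist u m := by
                have cc : T.dist m' m = T.dist m m' := SimpleGraph.dist_comm
                omega
              by_cases hvv : T.dist u v = T.dist u m'
              · exfalso
                have hbuvm' : T.dist u v + T.dist v m' = T.dist u m' :=
                  btw_ord hT hbvm hbum'm (le_of_eq hvv)
                have hvm'0 : T.dist v m' = 0 := by omega
                have hvm' : v = m' := dzero hT hvm'0
                have hvSn : v ∈ S n := Smono hmono (by omega) hv
                have hmlt : (S n).sup (fun z => T.dist m z) < (S n).sup (fun z => T.dist v z) := by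
                  by_contra hcon
                  push_neg at hcon
                  have hvmin' : ∀ w ∈ S n,
                      (S n).sup (fun z => T.dist v z) ≤ (S n).sup (fun z => T.dist w z) :=
                    fun w hw => le_trans hcon (hmmin w hw)
                  exact (ih v hvSn hvmin').2 rfl
                have heq1 : (S (n + 1)).sup (fun z => T.dist v z) =
                    (S (n + 1)).sup (fun z => T.dist m z) := by
                  rw [hvm']
                  exact heqs.symm
                have hvm1' : T.dist v m = 1 := by
                  rw [hvm']
                  have cc : T.dist m' m = T.dist m m' := SimpleGraph.dist_comm
                  omega
                have hbuvm2 : T.dist u v + T.dist v m = T.dist u m := hbvm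
                exact claimP hT h0 hmono hconv h1 hstep hvm1' hbuvm2 hvSn hmS hmlt heq1
              · have hlt' : T.dist u v ≤ T.dist u m' := by omega
                have hbuvm' : T.dist u v + T.dist v m' = T.dist u m' :=
                  btw_ord hT hbvm hbum'm hlt'
                refine ⟨hbuvm', fun hveq => hvv ?_⟩
                rw [hveq]
    have hvt : v ∈ S t := Smono hmono (by omega) hv
    exact (inv t ht v hvt hcontra).2 rfl
end
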